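/- Let I ⊆ ℝ be open, t ∈ I, and let x : I → ℝ^d and r : I → [0,∞) be functions. (i) If r(t) > 0 and both x and r are differentiable at t, then d_C((x(s),r(s)), (x(t),r(t)))/|s − t| → ( r'(t)² + r(t)²·|x'(t)|² )^{1/2} as s → t, s ≠ t. (ii) If r(t) = 0 and r is differentiable at t, then d_C((x(s),r(s)), (x(t),r(t)))/|s − t| → |r'(t)| as s → t, s ≠ t, with no assumption on x. -/

import Mathlib

open MeasureTheory Set Filter
open scoped Topology

/-- The ambient Euclidean space `ℝ^d`. -/
noncomputable abbrev Euc (d : ℕ) := EuclideanSpace ℝ (Fin d)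

/-- `cos_π(a) := cos (min |a| π)`. -/
noncomputable def cosPi (a : ℝ) : ℝ := Real.cos (min |a| Real.pi)

/-- The cone distance on `ℝ^d × [0,∞)` (with real-valued radius coordinate):
`d_C((x₀,r₀),(x₁,r₁)) = √(r₀² + r₁² − 2r₀r₁ cos_π(|x₁−x₀|))`. -/
noncomputable def coneDistR {d : ℕ} (z₀ z₁ : Euc d × ℝ) : ℝ :=
  Real.sqrt (z₀.2^2 + z₁.2^2 - 2 * z₀.2 * z₁.2 * cosPi (dist z₁.1 z₀.1))

lemma abs_sin_sub_le {u : ℝ} (h0 : 0 ≤ u) (h1 : u ≤ 1) :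
    |Real.sin u - u| ≤ u ^ 3 / 4 := by
  rcases eq_or_lt_of_le h0 with h | h
  · simp [← h]
  · have h2 := Real.sin_le h0
    have h3 := Real.sin_gt_sub_cube h
    rw [abs_sub_comm, abs_of_nonneg (by linarith)]
    linarith [pow_pos h 3]

/-- Pointwise metric-derivative formula for curves in the cone.
Let `I ⊆ ℝ` be open, `t ∈ I`, `x : I → ℝ^d`, `r : I → [0,∞)`.
(i) If `r t > 0` and `x, r` are differentiable at `t`, then
`d_C((x s, r s), (x t, r t))/|s − t| → √(r'(t)² + r(t)²|x'(t)|²)` as `s → t`, `s ≠ t`.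
(ii) If `r t = 0` and `r` is differentiable at `t`, then the same quotient tends to
`|r'(t)|`, with no assumption on `x`. -/
theorem coneDist_metric_derivative {d : ℕ} (I : Set ℝ) (hI : IsOpen I) (t : ℝ)
    (ht : t ∈ I) (x : ℝ → Euc d) (r : ℝ → ℝ) (hr : ∀ s ∈ I, 0 ≤ r s) :
    ((∀ (x' : Euc d) (r' : ℝ), 0 < r t → HasDerivAt x x' t → HasDerivAt r r' t →
      Tendsto (fun s => coneDistR (x s, r s) (x t, r t) / |s - t|) (𝓝[≠] t)
        (𝓝 (Real.sqrt (r'^2 + (r t)^2 * ‖x'‖^2)))) ∧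
     (∀ r' : ℝ, r t = 0 → HasDerivAt r r' t →
      Tendsto (fun s => coneDistR (x s, r s) (x t, r t) / |s - t|) (𝓝[≠] t)
        (𝓝 |r'|))) := by
  constructor
  · intro x' r' hrt hx hr'
    -- the distance function a s := dist (x t) (x s) tends to 0
    have ha0 : Tendsto (fun s => dist (x t) (x s)) (𝓝 t) (𝓝 0) := by
      have h : ContinuousAt (fun s => dist (x t) (x s)) t :=
        continuousAt_const.dist hx.continuousAt
      simpa using h.tendsto
    have hrc : Tendsto r (𝓝 t) (𝓝 (r t)) := hr'.continuousAt.tendsto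
    have hslr : Tendsto (slope r t) (𝓝[≠] t) (𝓝 r') :=
      hasDerivAt_iff_tendsto_slope.1 hr'
    have hslx : Tendsto (fun s => ‖slope x t s‖) (𝓝[≠] t) (𝓝 ‖x'‖) :=
      (hasDerivAt_iff_tendsto_slope.1 hx).norm
    -- norm of slope of x equals a s / |s - t|
    have hsl_eq : ∀ s : ℝ, s ≠ t →
        ‖slope x t s‖ = dist (x t) (x s) / |s - t| := by
      intro s hs
      rw [slope_def_module, norm_smul, norm_inv, Real.norm_eq_abs,
        dist_comm, dist_eq_norm, div_eq_inv_mul]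
    set a : ℝ → ℝ := fun s => dist (x t) (x s) with ha_def
    have haW : Tendsto a (𝓝[≠] t) (𝓝 0) := ha0.mono_left nhdsWithin_le_nhds
    set L : ℝ → ℝ := fun s => Real.sin (a s / 2) / |s - t| with hL_def
    have hM : Tendsto (fun s => a s / 2 / |s - t|) (𝓝[≠] t) (𝓝 (‖x'‖ / 2)) := by
      have h : Tendsto (fun s => ‖slope x t s‖ / 2) (𝓝[≠] t) (𝓝 (‖x'‖ / 2)) :=
        hslx.div_const 2
      refine Tendsto.congr' ?_ h
      filter_upwards [self_mem_nhdsWithin] with s hs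
      rw [hsl_eq s hs]; ring
    have hLM : Tendsto (fun s => L s - a s / 2 / |s - t|) (𝓝[≠] t) (𝓝 0) := by
      have hbnd : Tendsto (fun s => (a s)^2 / 32 * (a s / |s - t|)) (𝓝[≠] t)
          (𝓝 (0^2 / 32 * ‖x'‖)) := by
        apply Tendsto.mul ((haW.pow 2).div_const 32)
        refine Tendsto.congr' ?_ hslx
        filter_upwards [self_mem_nhdsWithin] with s hs
        rw [hsl_eq s hs]
      apply squeeze_zero_norm' ?_ (by simpa using hbnd)
      have h1 : ∀ᶠ s in 𝓝[≠] t, a s / 2 ≤ 1 := by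
        have := haW.eventually (eventually_le_nhds (show (0:ℝ) < 2 by norm_num))
        filter_upwards [this] with s hs; linarith
      filter_upwards [h1, self_mem_nhdsWithin] with s hs1 hs
      have hst : (0:ℝ) < |s - t| := abs_pos.2 (sub_ne_zero.2 hs)
      have ha0' : 0 ≤ a s := dist_nonneg
      have hb := abs_sin_sub_le (u := a s / 2) (by linarith) hs1
      have hrw : L s - a s / 2 / |s - t|
          = (Real.sin (a s / 2) - a s / 2) / |s - t| := by
        simp only [hL_def]; ring
      rw [Real.norm_eq_abs, hrw, abs_div, abs_abs, div_le_iff₀ hst]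
      calc |Real.sin (a s / 2) - a s / 2| ≤ (a s / 2) ^ 3 / 4 := hb
        _ = (a s)^2 / 32 * (a s / |s - t|) * |s - t| := by
            field_simp; ring
    have hL : Tendsto L (𝓝[≠] t) (𝓝 (‖x'‖ / 2)) := by
      have := hLM.add hM
      simpa using this
    -- the main limit, in the algebraically convenient form
    have hG : Tendsto (fun s => Real.sqrt ((slope r t s)^2 + 4 * r s * r t * (L s)^2))
        (𝓝[≠] t) (𝓝 (Real.sqrt (r'^2 + (r t)^2 * ‖x'‖^2))) := by
      have h1 : Tendsto (fun s => (slope r t s)^2 + 4 * r s * r t * (L s)^2)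
          (𝓝[≠] t) (𝓝 (r'^2 + 4 * r t * r t * (‖x'‖/2)^2)) :=
        (hslr.pow 2).add
          ((((hrc.mono_left nhdsWithin_le_nhds).const_mul 4).mul_const (r t)).mul (hL.pow 2))
      have h2 := (Real.continuous_sqrt.tendsto _).comp h1
      have h3 : r'^2 + 4 * r t * r t * (‖x'‖/2)^2 = r'^2 + (r t)^2 * ‖x'‖^2 := by ring
      rw [h3] at h2
      exact h2
    -- eventual equality
    refine Tendsto.congr' ?_ hG
    filter_upwards [nhdsWithin_le_nhds (hI.mem_nhds ht),
      nhdsWithin_le_nhds (ha0.eventually (eventually_lt_nhds Real.pi_pos)),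
      self_mem_nhdsWithin] with s hsI hsπ hs
    have hst : s - t ≠ 0 := sub_ne_zero.2 hs
    have hst' : (0:ℝ) < |s - t| := abs_pos.2 hst
    have ha0' : 0 ≤ a s := dist_nonneg
    have hrs : 0 ≤ r s := hr s hsI
    have hcos : cosPi (a s) = Real.cos (a s) := by
      rw [cosPi, abs_of_nonneg ha0', min_eq_left hsπ.le]
    have hcos2 : Real.cos (a s) = 1 - 2 * Real.sin (a s / 2)^2 := by
      have h := Real.cos_two_mul (a s / 2)
      rw [show 2 * (a s / 2) = a s by ring] at h
      rw [h, Real.cos_sq']; ring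
    have key : r s ^ 2 + (r t) ^ 2 - 2 * r s * r t * cosPi (a s)
        = (r s - r t)^2 + 4 * r s * r t * Real.sin (a s / 2)^2 := by
      rw [hcos, hcos2]; ring
    have hnn : 0 ≤ (r s - r t)^2 + 4 * r s * r t * Real.sin (a s / 2)^2 :=
      add_nonneg (sq_nonneg _) (by positivity)
    simp only [coneDistR]
    rw [show dist (x t, r t).1 (x s, r s).1 = a s from rfl]
    show Real.sqrt ((slope r t s)^2 + 4 * r s * r t * (L s)^2)
      = Real.sqrt (r s ^2 + (r t)^2 - 2 * r s * r t * cosPi (a s)) / |s - t|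
    rw [key, ← Real.sqrt_sq_eq_abs, ← Real.sqrt_div hnn]
    congr 1
    rw [slope_def_field]
    simp only [hL_def]
    have habs : |s - t|^2 = (s - t)^2 := sq_abs _
    rw [div_pow, div_pow, habs]
    field_simp
  · intro r' hrt0 hr'
    have hslr : Tendsto (slope r t) (𝓝[≠] t) (𝓝 r') :=
      hasDerivAt_iff_tendsto_slope.1 hr'
    refine Tendsto.congr' ?_ hslr.abs
    filter_upwards [self_mem_nhdsWithin] with s hs
    have hst : s - t ≠ 0 := sub_ne_zero.2 hs
    simp only [coneDistR]
    show |slope r t s|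
      = Real.sqrt (r s ^2 + (r t)^2 - 2 * r s * r t * cosPi (dist (x t) (x s))) / |s - t|
    rw [hrt0]
    rw [show r s ^ 2 + (0:ℝ)^2 - 2 * r s * 0 * cosPi (dist (x t) (x s)) = r s ^ 2 by ring,
      Real.sqrt_sq_eq_abs, slope_def_field, hrt0, abs_div]
    simp
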